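/- For every Sidon set B ⊆ ℕ and every function ω : ℝ → ℝ with ω(x) → ∞, there exists a perfect difference set A ⊆ ℕ satisfying A(x) ≥ B(x/3) − ω(x) for all sufficiently large x. -/

import Mathlib

open Filter

/-- `B` is a Sidon set: every nonzero integer has at most one representation
as a difference of two elements of `B`. -/
def IsSidonSet (B : Set ℤ) : Prop :=
  ∀ u : ℤ, u ≠ 0 → ({p : ℤ × ℤ | p.1 ∈ B ∧ p.2 ∈ B ∧ p.1 - p.2 = u}).Subsingleton

/-- `A` is a perfect difference set: every nonzero integer has exactly one
representation as a difference of two elements of `A`. -/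
def IsPerfectDifferenceSet (A : Set ℤ) : Prop :=
  ∀ u : ℤ, u ≠ 0 → ∃! p : ℤ × ℤ, p.1 ∈ A ∧ p.2 ∈ A ∧ p.1 - p.2 = u

/-- convenient reformulation of the Sidon property -/
def Sidon' (S : Set ℤ) : Prop :=
  ∀ a ∈ S, ∀ b ∈ S, ∀ c ∈ S, ∀ e ∈ S, a - b = c - e → a = b ∨ (a = c ∧ b = e)

lemma isSidonSet_iff_sidon' {S : Set ℤ} : IsSidonSet S ↔ Sidon' S := by
  constructor
  · intro h a ha b hb c hc e he hd
    by_cases hab : a = b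
    · exact Or.inl hab
    · right
      have hu : a - b ≠ 0 := fun hh => hab (by omega)
      have := h (a - b) hu (x := (a, b)) (y := (c, e)) ⟨ha, hb, rfl⟩ ⟨hc, he, hd.symm⟩
      exact ⟨congrArg Prod.fst this, congrArg Prod.snd this⟩
  · intro h u hu p hp q hq
    obtain ⟨hp1, hp2, hp3⟩ := hp
    obtain ⟨hq1, hq2, hq3⟩ := hq
    rcases h _ hp1 _ hp2 _ hq1 _ hq2 (by omega) with h1 | ⟨h1, h2⟩
    · exact absurd (h1 ▸ hp3) (by simpa using hu.symm)
    · exact Prod.ext h1 h2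

lemma Sidon'.sum_eq {S : Set ℤ} (h : Sidon' S) {a b c e : ℤ} (ha : a ∈ S) (hb : b ∈ S)
    (hc : c ∈ S) (he : e ∈ S) (hs : a + b = c + e) :
    (a = c ∧ b = e) ∨ (a = e ∧ b = c) := by
  rcases h a ha c hc e he b hb (by omega) with h1 | ⟨h1, h2⟩
  · exact Or.inl ⟨h1, by omega⟩
  · exact Or.inr ⟨h1, h2.symm⟩

/-- helper: card of a finite biUnion -/
lemma ncard_biUnion_le_of_le {α : Type*} (I : Finset α) (W : α → Set ℤ) (m : ℕ)
    (hfin : ∀ i, (W i).Finite) (hle : ∀ i, (W i).ncard ≤ m) :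
    (⋃ i ∈ I, W i).ncard ≤ I.card * m := by
  classical
  induction I using Finset.induction with
  | empty => simp
  | @insert x s hx ih =>
    have : (⋃ i ∈ insert x s, W i) = W x ∪ ⋃ i ∈ s, W i := by
      simp [Set.biUnion_insert]
    rw [this]
    have hfin2 : (⋃ i ∈ s, W i).Finite := Set.Finite.biUnion s.finite_toSet (fun i _ => hfin i)
    calc (W x ∪ ⋃ i ∈ s, W i).ncard ≤ (W x).ncard + (⋃ i ∈ s, W i).ncard :=
          Set.ncard_union_le _ _
      _ ≤ m + s.card * m := Nat.add_le_add (hle x) ih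
      _ ≤ (insert x s).card * m := by
          rw [Finset.card_insert_of_notMem hx]
          ring_nf
          omega

lemma ncard_le_one_of_subsingleton {s : Set ℤ} (h : s.Subsingleton) : s.ncard ≤ 1 := by
  rcases s.eq_empty_or_nonempty with rfl | ⟨x, hx⟩
  · simp
  · have hsub : s ⊆ {x} := fun y hy => h hy hx
    calc s.ncard ≤ ({x} : Set ℤ).ncard := Set.ncard_le_ncard hsub (Set.finite_singleton _)
      _ = 1 := Set.ncard_singleton _

/-- The key step lemma: given a Sidon set `P` of positive integers whose
non-multiples-of-3 form a finite set `G` bounded by `K`, and a target `u ≠ 0`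
not yet represented, we may insert the pair `{d, d+u}` after removing a small
set `R` of large multiples of 3, keeping the Sidon property. -/
lemma step_lemma (P : Set ℤ) (hP : Sidon' P) (hpos : ∀ p ∈ P, 0 < p)
    (G : Finset ℤ) (hG : ∀ p ∈ P, ¬ (3:ℤ) ∣ p → p ∈ G) (hG3 : ∀ g ∈ G, ¬ (3:ℤ) ∣ g)
    (K : ℤ) (hK : 0 ≤ K) (hGK : ∀ g ∈ G, g ≤ K)
    (u : ℤ) (hu : u ≠ 0) (hrep : ¬ ∃ p ∈ P, ∃ q ∈ P, p - q = u)
    (d : ℤ) (hd3 : ¬ (3:ℤ) ∣ d) (hdu3 : ¬ (3:ℤ) ∣ (d + u)) (hdK : 2*K + 2*|u| < d) :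
    ∃ R : Set ℤ, R ⊆ P ∧ (∀ v ∈ R, K < v ∧ (3:ℤ) ∣ v) ∧ R.Finite ∧
      R.ncard ≤ 4 * (G.card + 2)^3 ∧
      Sidon' ((P \ R) ∪ {d, d + u}) := by
  classical
  obtain ⟨U, hU0, hU1, hU2, hdK'⟩ : ∃ U : ℤ, 0 ≤ U ∧ u ≤ U ∧ -u ≤ U ∧ 2*K + 2*U < d :=
    ⟨|u|, abs_nonneg u, le_abs_self u, neg_le_abs u, hdK⟩
  set Pg : Set ℤ := P ∪ {d, d + u} with hPgdef
  set R : Set ℤ := {v : ℤ | v ∈ P ∧ K < v ∧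
    ∃ a ∈ Pg, ∃ b ∈ Pg, ∃ c ∈ Pg, v - a = b - c ∧ v ≠ a ∧ (v ≠ b ∨ a ≠ c)} with hRdef
  have hRP : R ⊆ P := fun v hv => hv.1
  have hRprop : ∀ v ∈ R, K < v ∧ (3:ℤ) ∣ v := by
    intro v hv
    obtain ⟨hv1, hv2, -⟩ := hv
    refine ⟨hv2, ?_⟩
    by_contra h3
    exact absurd (hGK v (hG v hv1 h3)) (by omega)
  -- the cover for the cardinality bound
  set Γ : Finset ℤ := G ∪ {d, d + u} with hΓdef
  have hΓmem : ∀ x ∈ Pg, (x ∈ P ∧ (3:ℤ) ∣ x) ∨ (x ∈ Γ ∧ ¬ (3:ℤ) ∣ x) := by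
    intro x hx
    rcases hx with hx | hx
    · by_cases h3 : (3:ℤ) ∣ x
      · exact Or.inl ⟨hx, h3⟩
      · exact Or.inr ⟨Finset.mem_union_left _ (hG x hx h3), h3⟩
    · rcases hx with rfl | hx
      · exact Or.inr ⟨Finset.mem_union_right _ (by simp), hd3⟩
      · rcases hx with rfl
        exact Or.inr ⟨Finset.mem_union_right _ (by simp), hdu3⟩
  set V1 : ℤ → ℤ → Set ℤ := fun s t => {v : ℤ | v ∈ P ∧ ∃ a ∈ P, v - a = s - t ∧ v ≠ a}
    with hV1def
  set V2 : ℤ → ℤ → Set ℤ := fun s t => {v : ℤ | v ∈ P ∧ ∃ c ∈ P, v + c = s + t} with hV2def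
  have hV1sub : ∀ s t, (V1 s t).Subsingleton := by
    intro s t v hv w hw
    obtain ⟨hvP, a, haP, hva, hvne⟩ := hv
    obtain ⟨hwP, a', haP', hwa, hwne⟩ := hw
    rcases hP v hvP a haP w hwP a' haP' (by omega) with h | ⟨h, _⟩
    · exact absurd h hvne
    · exact h
  have hV2card : ∀ s t, (V2 s t).ncard ≤ 2 ∧ (V2 s t).Finite := by
    intro s t
    by_cases hne : (V2 s t).Nonempty
    · obtain ⟨v₀, hv₀P, c₀, hc₀P, hsum₀⟩ := hne
      have hsub : V2 s t ⊆ {v₀, c₀} := by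
        intro v hv
        obtain ⟨hvP, c, hcP, hsum⟩ := hv
        rcases hP.sum_eq hvP hcP hv₀P hc₀P (by omega) with ⟨h, _⟩ | ⟨h, _⟩
        · exact Or.inl h
        · exact Or.inr h
      have hfin : (V2 s t).Finite := Set.Finite.subset ((Set.finite_singleton _).insert _) hsub
      exact ⟨le_trans (Set.ncard_le_ncard hsub ((Set.finite_singleton _).insert _))
        (le_trans (Set.ncard_insert_le _ _) (by simp)), hfin⟩
    · rw [Set.not_nonempty_iff_eq_empty] at hne
      simp [hne]
  set W : ℤ × ℤ × ℤ → Set ℤ := fun p => V1 p.1 p.2.1 ∪ V2 p.1 p.2.1 ∪ {p.1 + p.2.1 - p.2.2}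
    with hWdef
  have hWfin : ∀ p, (W p).Finite :=
    fun p => (((hV1sub _ _).finite.union (hV2card _ _).2).union (Set.finite_singleton _))
  have hWcard : ∀ p, (W p).ncard ≤ 4 := by
    intro p
    calc (W p).ncard ≤ (V1 p.1 p.2.1 ∪ V2 p.1 p.2.1).ncard + ({p.1 + p.2.1 - p.2.2} : Set ℤ).ncard :=
          Set.ncard_union_le _ _
      _ ≤ ((V1 p.1 p.2.1).ncard + (V2 p.1 p.2.1).ncard) + 1 := by
          have := Set.ncard_union_le (V1 p.1 p.2.1) (V2 p.1 p.2.1)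
          simp only [Set.ncard_singleton]
          omega
      _ ≤ 4 := by
          have h1 : (V1 p.1 p.2.1).ncard ≤ 1 := ncard_le_one_of_subsingleton (hV1sub _ _)
          have h2 := (hV2card p.1 p.2.1).1
          omega
  have hcover : R ⊆ ⋃ p ∈ (Γ ×ˢ Γ ×ˢ Γ), W p := by
    intro v hv
    obtain ⟨hvP, hvK, a, haPg, b, hbPg, c, hcPg, heq, hva, hvbc⟩ := hv
    have hv3 : (3:ℤ) ∣ v := (hRprop v (by exact ⟨hvP, hvK, a, haPg, b, hbPg, c, hcPg, heq, hva, hvbc⟩)).2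
    have hdΓ : d ∈ Γ := Finset.mem_union_right _ (by simp)
    rcases hΓmem a haPg with ⟨haP, ha3⟩ | ⟨haΓ, ha3⟩
    · rcases hΓmem b hbPg with ⟨hbP, hb3⟩ | ⟨hbΓ, hb3⟩
      · rcases hΓmem c hcPg with ⟨hcP, hc3⟩ | ⟨hcΓ, hc3⟩
        · -- all in P: contradiction with Sidon'
          rcases hP v hvP a haP b hbP c hcP heq with h | ⟨h1, h2⟩
          · exact absurd h hva
          · rcases hvbc with h | h
            · exact absurd h1 h
            · exact absurd h2 h
        · -- a,b mult, c not: mod 3 contradiction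
          exfalso
          omega
      · rcases hΓmem c hcPg with ⟨hcP, hc3⟩ | ⟨hcΓ, hc3⟩
        · -- a mult, b ∈ Γ, c mult: mod 3 contradiction
          exfalso
          omega
        · -- a mult (∈ P), b,c ∈ Γ: v ∈ V1 b c
          have hW : v ∈ W (b, c, d) :=
            Or.inl (Or.inl ⟨hvP, a, haP, show v - a = b - c by omega, hva⟩)
          exact Set.mem_biUnion (Finset.mem_product.2 ⟨hbΓ, Finset.mem_product.2 ⟨hcΓ, hdΓ⟩⟩) hW
    · rcases hΓmem b hbPg with ⟨hbP, hb3⟩ | ⟨hbΓ, hb3⟩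
      · rcases hΓmem c hcPg with ⟨hcP, hc3⟩ | ⟨hcΓ, hc3⟩
        · -- a ∈ Γ, b,c mult: mod 3 contradiction
          exfalso
          omega
        · -- a ∈ Γ, b mult-P, c ∈ Γ: v ∈ V1 a c via witness b
          have hW : v ∈ W (a, c, d) := by
            refine Or.inl (Or.inl ⟨hvP, b, hbP, show v - b = a - c by omega, ?_⟩)
            intro hvb
            rcases hvbc with h | h
            · exact h hvb
            · exact h (by omega)
          exact Set.mem_biUnion (Finset.mem_product.2 ⟨haΓ, Finset.mem_product.2 ⟨hcΓ, hdΓ⟩⟩) hW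
      · rcases hΓmem c hcPg with ⟨hcP, hc3⟩ | ⟨hcΓ, hc3⟩
        · -- a,b ∈ Γ, c mult-P: v ∈ V2 a b
          have hW : v ∈ W (a, b, d) :=
            Or.inl (Or.inr ⟨hvP, c, hcP, show v + c = a + b by omega⟩)
          exact Set.mem_biUnion (Finset.mem_product.2 ⟨haΓ, Finset.mem_product.2 ⟨hbΓ, hdΓ⟩⟩) hW
        · -- a,b,c ∈ Γ: singleton
          have hW : v ∈ W (a, b, c) :=
            Or.inr (show v ∈ ({a + b - c} : Set ℤ) by simp only [Set.mem_singleton_iff]; omega)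
          exact Set.mem_biUnion (Finset.mem_product.2 ⟨haΓ, Finset.mem_product.2 ⟨hbΓ, hcΓ⟩⟩) hW
  have hcovfin : (⋃ p ∈ (Γ ×ˢ Γ ×ˢ Γ), W p).Finite :=
    Set.Finite.biUnion (Finset.finite_toSet _) (fun p _ => hWfin p)
  have hRfin : R.Finite := hcovfin.subset hcover
  have hRcard : R.ncard ≤ 4 * (G.card + 2)^3 := by
    have h1 := ncard_biUnion_le_of_le (Γ ×ˢ Γ ×ˢ Γ) W 4 hWfin hWcard
    have h2 : (Γ ×ˢ Γ ×ˢ Γ).card = Γ.card * (Γ.card * Γ.card) := by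
      simp [Finset.card_product]
    have h3 : Γ.card ≤ G.card + 2 := by
      calc Γ.card ≤ G.card + ({d, d+u} : Finset ℤ).card := Finset.card_union_le _ _
        _ ≤ G.card + 2 := by
            have : ({d, d+u} : Finset ℤ).card ≤ 2 := Finset.card_insert_le _ _ |>.trans (by simp)
            omega
    have h4 := Set.ncard_le_ncard hcover hcovfin
    calc R.ncard ≤ (Γ ×ˢ Γ ×ˢ Γ).card * 4 := le_trans h4 h1
      _ ≤ ((G.card + 2) * ((G.card + 2) * (G.card + 2))) * 4 := by
          rw [h2]
          exact Nat.mul_le_mul_right _ (Nat.mul_le_mul h3 (Nat.mul_le_mul h3 h3))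
      _ = 4 * (G.card + 2)^3 := by ring
  refine ⟨R, hRP, hRprop, hRfin, hRcard, ?_⟩
  -- now the Sidon property of the new set
  intro a ha b hb c hc e he hdiff
  by_cases hab : a = b
  · exact Or.inl hab
  right
  by_contra hcon
  have hne : a ≠ c ∨ b ≠ e := by
    by_contra h
    push_neg at h
    exact hcon ⟨h.1, h.2⟩
  have hTPg : ∀ x, x ∈ (P \ R) ∪ {d, d + u} → x ∈ Pg := by
    intro x hx
    rcases hx with hx | hx
    · exact Or.inl hx.1
    · exact Or.inr hx
  have hmem : ∀ x, x ∈ (P \ R) ∪ {d, d + u} → (x ∈ P ∧ x ∉ R) ∨ x = d ∨ x = d + u := by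
    intro x hx
    rcases hx with hx | hx
    · exact Or.inl ⟨hx.1, hx.2⟩
    · rcases hx with h | h
      · exact Or.inr (Or.inl h)
      · exact Or.inr (Or.inr h)
  have hsA : a ∈ P → a ∉ R → a ≤ K := by
    intro hp hr
    by_contra hK'
    exact hr ⟨hp, by omega, b, hTPg b hb, c, hTPg c hc, e, hTPg e he, by omega, hab, hne⟩
  have hsB : b ∈ P → b ∉ R → b ≤ K := by
    intro hp hr
    by_contra hK'
    exact hr ⟨hp, by omega, a, hTPg a ha, e, hTPg e he, c, hTPg c hc, by omega, Ne.symm hab,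
      hne.symm⟩
  have hsC : c ∈ P → c ∉ R → c ≤ K := by
    intro hp hr
    by_contra hK'
    refine hr ⟨hp, by omega, e, hTPg e he, a, hTPg a ha, b, hTPg b hb, by omega, ?_, ?_⟩
    · intro h; exact hab (by omega)
    · exact hne.imp Ne.symm Ne.symm
  have hsE : e ∈ P → e ∉ R → e ≤ K := by
    intro hp hr
    by_contra hK'
    refine hr ⟨hp, by omega, c, hTPg c hc, b, hTPg b hb, a, hTPg a ha, by omega, ?_, ?_⟩
    · intro h; exact hab (by omega)
    · exact hne.symm.imp Ne.symm Ne.symm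
  rcases hne with hne | hne <;>
  rcases hmem a ha with ⟨haP, haR⟩ | rfl | rfl <;>
  rcases hmem b hb with ⟨hbP, hbR⟩ | rfl | rfl <;>
  rcases hmem c hc with ⟨hcP, hcR⟩ | rfl | rfl <;>
  rcases hmem e he with ⟨heP, heR⟩ | rfl | rfl <;>
  first
  | omega
  | (first
      | (have h0a : 0 < a := hpos a haP
         have hKa : a ≤ K := hsA haP haR) 
      | skip
     first
      | (have h0b : 0 < b := hpos b hbP
         have hKb : b ≤ K := hsB hbP hbR)
      | skip
     first
      | (have h0c : 0 < c := hpos c hcP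
         have hKc : c ≤ K := hsC hcP hcR)
      | skip
     first
      | (have h0e : 0 < e := hpos e heP
         have hKe : e ≤ K := hsE heP heR)
      | skip
     first
      | omega
      | exact hrep ⟨c, hcP, e, heP, by omega⟩
      | exact hrep ⟨e, heP, c, hcP, by omega⟩
      | exact hrep ⟨a, haP, b, hbP, by omega⟩
      | exact hrep ⟨b, hbP, a, haP, by omega⟩
      | exact hrep ⟨b, hbP, e, heP, by omega⟩
      | exact hrep ⟨e, heP, b, hbP, by omega⟩
      | exact hrep ⟨a, haP, c, hcP, by omega⟩
      | exact hrep ⟨c, hcP, a, haP, by omega⟩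
      | exact hrep ⟨a, haP, e, heP, by omega⟩
      | exact hrep ⟨e, heP, a, haP, by omega⟩
      | exact hrep ⟨b, hbP, c, hcP, by omega⟩
      | exact hrep ⟨c, hcP, b, hbP, by omega⟩
      | (rcases hP a haP b hbP c hcP e heP hdiff with h | h
         · exact hab h
         · exact hcon ⟨h.1, h.2⟩))

/-! ### The construction -/

structure PDState where
  F : Finset ℤ
  G : Finset ℤ
  Pi : Finset ℤ
  K : ℤ

/-- the current "plan": dilated surviving part of `B` together with gadgets -/
def PState (B : Set ℤ) (s : PDState) : Set ℤ :=
  (fun b => 3*b) '' (B \ ↑s.F) ∪ ↑s.G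

/-- target enumeration -/
noncomputable def useq : ℕ → ℤ := fun n => Denumerable.ofNat ℤ n

lemma useq_surj (z : ℤ) : ∃ n, useq n = z :=
  ⟨Encodable.encode z, by exact Denumerable.ofNat_encode z⟩

/-- per-stage ban budget -/
def bbound : ℕ → ℕ := fun k => 4 * (2*k + 4)^3

def Sbudget : ℕ → ℕ
  | 0 => 0
  | (k+1) => Sbudget k + bbound k

structure PDInv (B : Set ℤ) (ω : ℝ → ℝ) (k : ℕ) (s : PDState) : Prop where
  sidon : Sidon' (PState B s)
  pos : ∀ p ∈ PState B s, 0 < p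
  gmem : ∀ p ∈ PState B s, ¬(3:ℤ) ∣ p → p ∈ s.G
  g3 : ∀ g ∈ s.G, ¬ (3:ℤ) ∣ g
  gK : ∀ g ∈ s.G, g ≤ s.K
  piP : ∀ p ∈ s.Pi, p ∈ PState B s
  piK : ∀ p ∈ s.Pi, p ≤ s.K
  Kpos : 0 ≤ s.K
  Fcard : s.F.card ≤ Sbudget k
  Gcard : s.G.card ≤ 2*k
  FB : ∀ b ∈ s.F, b ∈ B
  core : ∀ j, j < k → useq j ≠ 0 →
    ∃ x ∈ (↑s.G ∪ ↑s.Pi : Set ℤ), ∃ y ∈ (↑s.G ∪ ↑s.Pi : Set ℤ), x - y = useq j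
  count : ∀ z : ℝ, 0 ≤ z → (∃ b ∈ s.F, ((3*b : ℤ) : ℝ) ≤ z) →
    ((s.F.filter (fun b => ((3*b : ℤ) : ℝ) ≤ z)).card : ℝ) ≤ ω z

structure PDExt (s s' : PDState) : Prop where
  hF : s.F ⊆ s'.F
  hG : s.G ⊆ s'.G
  hPi : s.Pi ⊆ s'.Pi
  hK : s.K ≤ s'.K
  newF : ∀ b ∈ s'.F, b ∉ s.F → s.K < 3*b

lemma PDExt.refl' (s : PDState) : PDExt s s :=
  ⟨Finset.Subset.refl _, Finset.Subset.refl _, Finset.Subset.refl _, le_refl _,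
    fun b hb hnb => absurd hb hnb⟩

lemma PDExt.trans' {s t r : PDState} (h1 : PDExt s t) (h2 : PDExt t r) : PDExt s r := by
  refine ⟨h1.hF.trans h2.hF, h1.hG.trans h2.hG, h1.hPi.trans h2.hPi, h1.hK.trans h2.hK, ?_⟩
  intro b hb hnb
  by_cases hbt : b ∈ t.F
  · exact h1.newF b hbt hnb
  · exact lt_of_le_of_lt h1.hK (h2.newF b hb hbt)

lemma exists_d (K u : ℤ) (hK : 0 ≤ K) :
    ∃ d : ℤ, ¬(3:ℤ) ∣ d ∧ ¬(3:ℤ) ∣ (d+u) ∧ 2*K + 2*|u| < d := by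
  obtain ⟨U, hU0, hU1, hU2, hUabs⟩ : ∃ U : ℤ, 0 ≤ U ∧ u ≤ U ∧ -u ≤ U ∧ |u| = U :=
    ⟨|u|, abs_nonneg u, le_abs_self u, neg_le_abs u, rfl⟩
  by_cases hc : u % 3 = 2
  · exact ⟨3*(2*K+2*U+3) + 2, by omega, by omega, by omega⟩
  · exact ⟨3*(2*K+2*U+3) + 1, by omega, by omega, by omega⟩

lemma exists_next {B : Set ℤ} {ω : ℝ → ℝ} (hω : Tendsto ω atTop atTop) {k : ℕ} {s : PDState}
    (h : PDInv B ω k s) : ∃ s', PDInv B ω (k+1) s' ∧ PDExt s s' := by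
  classical
  by_cases hu0 : useq k = 0
  · refine ⟨s, ⟨h.sidon, h.pos, h.gmem, h.g3, h.gK, h.piP, h.piK, h.Kpos,
      le_trans h.Fcard (by simp [Sbudget]), by have := h.Gcard; omega, h.FB, ?_,
      h.count⟩, PDExt.refl' s⟩
    intro j hj hju
    rcases Nat.lt_succ_iff_lt_or_eq.1 hj with hj | rfl
    · exact h.core j hj hju
    · exact absurd hu0 hju
  by_cases hrep : ∃ x ∈ PState B s, ∃ y ∈ PState B s, x - y = useq k
  · obtain ⟨x, hx, y, hy, hxy⟩ := hrep
    set s' : PDState := ⟨s.F, s.G, s.Pi ∪ {x, y}, max s.K (max x y)⟩ with hs'def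
    have hP' : PState B s' = PState B s := rfl
    have hpiP : ∀ p ∈ s'.Pi, p ∈ PState B s' := by
      intro p hp
      rw [hP']
      have hp' : p ∈ s.Pi ∪ {x, y} := hp
      simp only [Finset.mem_union, Finset.mem_insert, Finset.mem_singleton] at hp'
      rcases hp' with hp' | rfl | rfl
      · exact h.piP p hp'
      · exact hx
      · exact hy
    have hpiK : ∀ p ∈ s'.Pi, p ≤ s'.K := by
      intro p hp
      have hp' : p ∈ s.Pi ∪ {x, y} := hp
      simp only [Finset.mem_union, Finset.mem_insert, Finset.mem_singleton] at hp'
      show p ≤ max s.K (max x y)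
      rcases hp' with hp' | rfl | rfl
      · exact le_trans (h.piK p hp') (le_max_left _ _)
      · exact le_trans (le_max_left _ _) (le_max_right _ _)
      · exact le_trans (le_max_right _ _) (le_max_right _ _)
    have hcore : ∀ j, j < k+1 → useq j ≠ 0 →
        ∃ a ∈ (↑s'.G ∪ ↑s'.Pi : Set ℤ), ∃ b ∈ (↑s'.G ∪ ↑s'.Pi : Set ℤ), a - b = useq j := by
      intro j hj hju
      have hset : ∀ w : ℤ, w ∈ (↑s.G ∪ ↑s.Pi : Set ℤ) ∨ w = x ∨ w = y →
          w ∈ (↑s'.G ∪ ↑s'.Pi : Set ℤ) := by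
        intro w hw
        show w ∈ (↑s.G ∪ ↑(s.Pi ∪ {x, y}) : Set ℤ)
        simp only [Set.mem_union, Finset.mem_coe, Finset.mem_union, Finset.mem_insert,
          Finset.mem_singleton] at *
        tauto
      rcases Nat.lt_succ_iff_lt_or_eq.1 hj with hj | rfl
      · obtain ⟨a, ha, b, hb, hab⟩ := h.core j hj hju
        exact ⟨a, hset a (Or.inl ha), b, hset b (Or.inl hb), hab⟩
      · exact ⟨x, hset x (Or.inr (Or.inl rfl)), y, hset y (Or.inr (Or.inr rfl)), hxy⟩
    refine ⟨s', ⟨by rw [hP']; exact h.sidon, by rw [hP']; exact h.pos,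
      by rw [hP']; exact h.gmem, h.g3, ?_, hpiP, hpiK, ?_,
      le_trans h.Fcard (by simp [Sbudget]), by have := h.Gcard; show s.G.card ≤ 2*(k+1); omega,
      h.FB, hcore, h.count⟩, ?_⟩
    · intro g hg
      exact le_trans (h.gK g hg) (le_max_left _ _)
    · exact le_trans h.Kpos (le_max_left _ _)
    · exact ⟨Finset.Subset.refl _, Finset.Subset.refl _, Finset.subset_union_left,
        le_max_left _ _, fun b hb hnb => absurd hb hnb⟩
  · -- add a gadget pair
    set u := useq k with hudef
    obtain ⟨U, hU0, hU1, hU2, hUabs⟩ : ∃ U : ℤ, 0 ≤ U ∧ u ≤ U ∧ -u ≤ U ∧ |u| = U :=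
      ⟨|u|, abs_nonneg u, le_abs_self u, neg_le_abs u, rfl⟩
    obtain ⟨τ₀, hτ₀⟩ := eventually_atTop.1 (tendsto_atTop.1 hω (Sbudget (k+1) : ℝ))
    set τ : ℝ := max τ₀ 0 with hτdef
    have hτ : ∀ z : ℝ, τ ≤ z → (Sbudget (k+1) : ℝ) ≤ ω z :=
      fun z hz => hτ₀ z (le_trans (le_max_left _ _) hz)
    have hτpos : 0 ≤ τ := le_max_right _ _
    set K₁ : ℤ := max (max s.K 0) ⌈3*τ⌉ with hK₁def
    have hK₁0 : 0 ≤ K₁ := le_trans (le_max_right s.K 0) (le_max_left _ _)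
    have hK₁K : s.K ≤ K₁ := le_trans (le_max_left s.K 0) (le_max_left _ _)
    have hK₁τ : 3*τ ≤ (K₁ : ℝ) := by
      have h1 : (⌈3*τ⌉ : ℤ) ≤ K₁ := le_max_right _ _
      exact le_trans (Int.le_ceil (3*τ)) (by exact_mod_cast h1)
    obtain ⟨d, hd3, hdu3, hdK⟩ := exists_d K₁ u hK₁0
    obtain ⟨R, hRP, hRprop, hRfin, hRcard, hSidon⟩ :=
      step_lemma (PState B s) h.sidon h.pos s.G h.gmem h.g3 K₁ hK₁0
        (fun g hg => le_trans (h.gK g hg) hK₁K) u hu0 hrep d hd3 hdu3 hdK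
    set newF : Finset ℤ := hRfin.toFinset.image (fun v => v / 3) with hnewFdef
    have hRform : ∀ v ∈ R, ∃ b, b ∈ B ∧ b ∉ s.F ∧ v = 3*b := by
      intro v hv
      have h3 : (3:ℤ) ∣ v := (hRprop v hv).2
      rcases hRP hv with hvm | hvG
      · obtain ⟨b, hb, rfl⟩ := hvm
        exact ⟨b, hb.1, by simpa using hb.2, rfl⟩
      · exact absurd h3 (h.g3 v hvG)
    have hnewF : ∀ b : ℤ, b ∈ newF ↔ (3*b) ∈ R := by
      intro b
      constructor
      · intro hb
        simp only [hnewFdef, Finset.mem_image, Set.Finite.mem_toFinset] at hb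
        obtain ⟨v, hv, rfl⟩ := hb
        obtain ⟨b', hb'B, hb'F, rfl⟩ := hRform v hv
        simpa [Int.mul_ediv_cancel_left] using hv
      · intro hb
        simp only [hnewFdef, Finset.mem_image, Set.Finite.mem_toFinset]
        exact ⟨3*b, hb, by simp [Int.mul_ediv_cancel_left]⟩
    have hnewFcard : newF.card ≤ R.ncard := by
      calc newF.card ≤ hRfin.toFinset.card := Finset.card_image_le
        _ = R.ncard := (Set.ncard_eq_toFinset_card _ hRfin).symm
    have hFcard' : (s.F ∪ newF).card ≤ Sbudget (k+1) := by
      have h2 : (s.F ∪ newF).card ≤ s.F.card + newF.card := Finset.card_union_le _ _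
      have h3 : 4 * (s.G.card + 2)^3 ≤ bbound k := by
        have hg := h.Gcard
        have hp : (s.G.card + 2)^3 ≤ (2*k + 4)^3 := Nat.pow_le_pow_left (by omega) 3
        simp only [bbound]
        omega
      have := h.Fcard
      simp only [Sbudget]
      omega
    set s' : PDState := ⟨s.F ∪ newF, s.G ∪ {d, d+u}, s.Pi, max K₁ (d + U)⟩ with hs'def
    have hGR : ∀ g ∈ s.G, g ∉ R := by
      intro g hg hgR
      exact absurd (hRprop g hgR).2 (h.g3 g hg)
    have hPeq : PState B s' = ((PState B s) \ R) ∪ {d, d + u} := by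
      ext p
      simp only [hs'def, PState, Set.mem_union, Set.mem_image, Set.mem_diff, Finset.coe_union,
        Finset.mem_coe, Finset.mem_union, Finset.coe_insert, Set.mem_insert_iff,
        Finset.coe_singleton, Set.mem_singleton_iff, Finset.mem_insert, Finset.mem_singleton]
      constructor
      · rintro (⟨b, ⟨hbB, hbF⟩, rfl⟩ | (hg | hg))
        · refine Or.inl ⟨Or.inl ⟨b, ⟨hbB, fun hb => hbF (Or.inl hb)⟩, rfl⟩, ?_⟩
          intro hR
          exact hbF (Or.inr ((hnewF b).2 hR))
        · exact Or.inl ⟨Or.inr hg, hGR _ hg⟩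
        · exact Or.inr hg
      · rintro (⟨(⟨b, ⟨hbB, hbF⟩, rfl⟩ | hg), hR⟩ | hg)
        · refine Or.inl ⟨b, ⟨hbB, ?_⟩, rfl⟩
          rintro (hb | hb)
          · exact hbF hb
          · exact hR ((hnewF b).1 hb)
        · exact Or.inr (Or.inl hg)
        · exact Or.inr (Or.inr hg)
    refine ⟨s', ⟨?_, ?_, ?_, ?_, ?_, ?_, ?_, ?_, ?_, ?_, ?_, ?_, ?_⟩, ?_⟩
    · rw [hPeq]; exact hSidon
    · rw [hPeq]
      rintro p (⟨hp, -⟩ | hp)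
      · exact h.pos p hp
      · rcases hp with rfl | rfl <;> omega
    · rw [hPeq]
      rintro p (⟨hp, -⟩ | hp) h3
      · exact Finset.mem_union_left _ (h.gmem p hp h3)
      · show p ∈ s.G ∪ {d, d+u}
        rcases hp with rfl | rfl <;> simp
    · intro g hg
      have hg' : g ∈ s.G ∪ {d, d+u} := hg
      rcases Finset.mem_union.1 hg' with hg' | hg'
      · exact h.g3 g hg'
      · rcases Finset.mem_insert.1 hg' with rfl | hg'
        · exact hd3
        · rw [Finset.mem_singleton.1 hg']; exact hdu3
    · intro g hg
      have hg' : g ∈ s.G ∪ {d, d+u} := hg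
      show g ≤ max K₁ (d + U)
      rcases Finset.mem_union.1 hg' with hg' | hg'
      · exact le_trans (h.gK g hg') (le_trans hK₁K (le_max_left _ _))
      · rcases Finset.mem_insert.1 hg' with rfl | hg'
        · refine le_trans ?_ (le_max_right _ _); omega
        · rw [Finset.mem_singleton.1 hg']
          refine le_trans ?_ (le_max_right _ _); omega
    · intro p hp
      rw [hPeq]
      have hp' : p ∈ s.Pi := hp
      refine Or.inl ⟨h.piP p hp', ?_⟩
      intro hpR
      have h1 := (hRprop p hpR).1
      have h2 := h.piK p hp'
      omega
    · intro p hp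
      have hp' : p ∈ s.Pi := hp
      show p ≤ max K₁ (d + U)
      exact le_trans (h.piK p hp') (le_trans hK₁K (le_max_left _ _))
    · show (0:ℤ) ≤ max K₁ (d + U)
      exact le_trans hK₁0 (le_max_left _ _)
    · exact hFcard'
    · show (s.G ∪ {d, d+u}).card ≤ 2*(k+1)
      have hg := h.Gcard
      have h2 : (s.G ∪ {d, d+u}).card ≤ s.G.card + 2 :=
        le_trans (Finset.card_union_le _ _) (by
          have : ({d, d+u} : Finset ℤ).card ≤ 2 :=
            le_trans (Finset.card_insert_le _ _) (by simp)
          omega)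
      omega
    · intro b hb
      have hb' : b ∈ s.F ∪ newF := hb
      rcases Finset.mem_union.1 hb' with hb' | hb'
      · exact h.FB b hb'
      · obtain ⟨b', hb'B, -, heq⟩ := hRform (3*b) ((hnewF b).1 hb')
        have : b = b' := by omega
        rw [this]; exact hb'B
    · intro j hj hju
      have hset : ∀ w : ℤ, w ∈ (↑s.G ∪ ↑s.Pi : Set ℤ) ∨ w = d ∨ w = d + u →
          w ∈ (↑s'.G ∪ ↑s'.Pi : Set ℤ) := by
        intro w hw
        show w ∈ (↑(s.G ∪ {d, d+u}) ∪ ↑s.Pi : Set ℤ)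
        simp only [Set.mem_union, Finset.mem_coe, Finset.mem_union, Finset.mem_insert,
          Finset.mem_singleton] at *
        tauto
      rcases Nat.lt_succ_iff_lt_or_eq.1 hj with hj | rfl
      · obtain ⟨a, ha, b, hb, hab⟩ := h.core j hj hju
        exact ⟨a, hset a (Or.inl ha), b, hset b (Or.inl hb), hab⟩
      · exact ⟨d + u, hset _ (Or.inr (Or.inr rfl)), d, hset _ (Or.inr (Or.inl rfl)), by omega⟩
    · intro z hz0 hwit
      show (((s.F ∪ newF).filter (fun b => ((3*b : ℤ) : ℝ) ≤ z)).card : ℝ) ≤ ω z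
      by_cases hnew : ∃ b ∈ newF, ((3*b : ℤ) : ℝ) ≤ z
      · obtain ⟨b, hb, hbz⟩ := hnew
        have hR3 : (3*b) ∈ R := (hnewF b).1 hb
        have h1 : K₁ < 3*b := (hRprop _ hR3).1
        have h2 : τ ≤ z := by
          have h3 : 3*τ ≤ ((3*b : ℤ) : ℝ) := by
            calc 3*τ ≤ (K₁ : ℝ) := hK₁τ
              _ ≤ ((3*b : ℤ) : ℝ) := by exact_mod_cast le_of_lt h1
          nlinarith [hτpos]
        have h3 := hτ z h2
        have h4 : (((s.F ∪ newF).filter (fun b => ((3*b : ℤ) : ℝ) ≤ z)).card : ℝ) ≤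
            ((s.F ∪ newF).card : ℝ) := by
          exact_mod_cast Finset.card_filter_le _ _
        calc (((s.F ∪ newF).filter (fun b => ((3*b : ℤ) : ℝ) ≤ z)).card : ℝ)
            ≤ ((s.F ∪ newF).card : ℝ) := h4
          _ ≤ (Sbudget (k+1) : ℝ) := by exact_mod_cast hFcard'
          _ ≤ ω z := h3
      · push_neg at hnew
        have hfeq : (s.F ∪ newF).filter (fun b => ((3*b : ℤ) : ℝ) ≤ z) =
            s.F.filter (fun b => ((3*b : ℤ) : ℝ) ≤ z) := by
          apply Finset.ext
          intro b
          simp only [Finset.mem_filter, Finset.mem_union]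
          constructor
          · rintro ⟨hb | hb, hbz⟩
            · exact ⟨hb, hbz⟩
            · exact absurd hbz (not_le.2 (hnew b hb))
          · rintro ⟨hb, hbz⟩
            exact ⟨Or.inl hb, hbz⟩
        rw [hfeq]
        apply h.count z hz0
        obtain ⟨b, hb, hbz⟩ := hwit
        have hb' : b ∈ s.F ∪ newF := hb
        rcases Finset.mem_union.1 hb' with hb' | hb'
        · exact ⟨b, hb', hbz⟩
        · exact absurd hbz (not_le.2 (hnew b hb'))
    · refine ⟨Finset.subset_union_left, Finset.subset_union_left, Finset.Subset.refl _,
        le_trans hK₁K (le_trans (le_max_left _ _) (le_refl _)), ?_⟩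
      intro b hb hnb
      have hb' : b ∈ s.F ∪ newF := hb
      have hbn : b ∈ newF := by
        rcases Finset.mem_union.1 hb' with hb' | hb'
        · exact absurd hb' hnb
        · exact hb'
      have h1 := (hRprop (3*b) ((hnewF b).1 hbn)).1
      omega

noncomputable def chain (B : Set ℤ) (ω : ℝ → ℝ) (hω : Tendsto ω atTop atTop)
    (init : PDState) (h0 : PDInv B ω 0 init) : (k : ℕ) → {s : PDState // PDInv B ω k s}
  | 0 => ⟨init, h0⟩
  | (k+1) => ⟨(exists_next hω (chain B ω hω init h0 k).2).choose,
      (Classical.choose_spec (exists_next hω (chain B ω hω init h0 k).2)).1⟩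

lemma chain_ext (B : Set ℤ) (ω : ℝ → ℝ) (hω : Tendsto ω atTop atTop)
    (init : PDState) (h0 : PDInv B ω 0 init) (k : ℕ) :
    PDExt (chain B ω hω init h0 k).1 (chain B ω hω init h0 (k+1)).1 := by
  have : (chain B ω hω init h0 (k+1)).1 =
      (exists_next hω (chain B ω hω init h0 k).2).choose := by
    rfl
  rw [this]
  exact (Classical.choose_spec (exists_next hω (chain B ω hω init h0 k).2)).2

lemma chain_ext_le (B : Set ℤ) (ω : ℝ → ℝ) (hω : Tendsto ω atTop atTop)
    (init : PDState) (h0 : PDInv B ω 0 init) {k m : ℕ} (hkm : k ≤ m) :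
    PDExt (chain B ω hω init h0 k).1 (chain B ω hω init h0 m).1 := by
  induction m with
  | zero =>
    have : k = 0 := Nat.le_zero.1 hkm
    subst this
    exact PDExt.refl' _
  | succ m ih =>
    rcases Nat.le_succ_iff_eq_or_le.1 hkm with rfl | hkm'
    · exact PDExt.refl' _
    · exact PDExt.trans' (ih hkm') (chain_ext B ω hω init h0 m)

lemma finset_subset_stage (Fa : ℕ → Finset ℤ) (hmono : ∀ k m, k ≤ m → Fa k ⊆ Fa m)
    (S : Finset ℤ) (h : ∀ b ∈ S, ∃ k, b ∈ Fa k) : ∃ m, ∀ b ∈ S, b ∈ Fa m := by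
  classical
  revert h
  induction S using Finset.induction with
  | empty => exact fun _ => ⟨0, by simp⟩
  | @insert a s ha ih =>
    intro h
    obtain ⟨m, hm⟩ := ih (fun b hb => h b (Finset.mem_insert_of_mem hb))
    obtain ⟨ka, hka⟩ := h a (Finset.mem_insert_self a s)
    refine ⟨max m ka, ?_⟩
    intro b hb
    rcases Finset.mem_insert.1 hb with rfl | hb
    · exact hmono ka _ (le_max_right _ _) hka
    · exact hmono m _ (le_max_left _ _) (hm b hb)

lemma bdd_pos_finite (S : Set ℤ) (hpos : ∀ s ∈ S, 0 < s) (x : ℝ) :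
    {s ∈ S | (s:ℝ) ≤ x}.Finite := by
  apply Set.Finite.subset (Set.finite_Icc (1:ℤ) ⌈x⌉)
  intro s hs
  obtain ⟨hsS, hsx⟩ := hs
  refine ⟨hpos s hsS, ?_⟩
  have h1 : (s:ℝ) ≤ (⌈x⌉ : ℝ) := le_trans hsx (Int.le_ceil x)
  exact_mod_cast h1


theorem stmt_11 (B : Set ℤ) (hBpos : ∀ b ∈ B, 0 < b) (hB : IsSidonSet B)
    (ω : ℝ → ℝ) (hω : Tendsto ω atTop atTop) :
    ∃ A : Set ℤ, (∀ a ∈ A, 0 < a) ∧ IsPerfectDifferenceSet A ∧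
      ∀ᶠ x in atTop,
        (({b ∈ B | (b : ℝ) ≤ x / 3}).ncard : ℝ) - ω x ≤
          (({a ∈ A | (a : ℝ) ≤ x}).ncard : ℝ) := by
  classical
  have hB' : Sidon' B := isSidonSet_iff_sidon'.1 hB
  have hP0 : PState B ⟨∅, ∅, ∅, 0⟩ = (fun b => 3*b) '' B := by
    simp [PState]
  have h0 : PDInv B ω 0 ⟨∅, ∅, ∅, 0⟩ := by
    refine ⟨?_, ?_, ?_, ?_, ?_, ?_, ?_, le_refl _, ?_, ?_, ?_, ?_, ?_⟩
    · rw [hP0]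
      rintro a ⟨a', ha', rfl⟩ b ⟨b', hb', rfl⟩ c ⟨c', hc', rfl⟩ e ⟨e', he', rfl⟩ hd
      have hd' : 3*a' - 3*b' = 3*c' - 3*e' := hd
      rcases hB' a' ha' b' hb' c' hc' e' he' (by omega) with h | ⟨h1, h2⟩
      · exact Or.inl (by show 3*a' = 3*b'; omega)
      · exact Or.inr ⟨by show 3*a' = 3*c'; omega, by show 3*b' = 3*e'; omega⟩
    · rw [hP0]
      rintro p ⟨b, hb, rfl⟩
      have := hBpos b hb
      show 0 < 3*b
      omega
    · rw [hP0]
      rintro p ⟨b, hb, rfl⟩ h3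
      exact absurd ⟨b, rfl⟩ h3
    · intro g hg
      simp at hg
    · intro g hg
      simp at hg
    · intro p hp
      simp at hp
    · intro p hp
      simp at hp
    · simp [Sbudget]
    · simp
    · intro b hb
      simp at hb
    · intro j hj
      omega
    · intro z hz hwit
      obtain ⟨b, hb, -⟩ := hwit
      simp at hb
  set st : ℕ → PDState := fun k => (chain B ω hω ⟨∅, ∅, ∅, 0⟩ h0 k).1 with hstdef
  have hinv : ∀ k, PDInv B ω k (st k) := fun k => (chain B ω hω ⟨∅, ∅, ∅, 0⟩ h0 k).2
  have hext : ∀ {k m}, k ≤ m → PDExt (st k) (st m) :=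
    fun h => chain_ext_le B ω hω ⟨∅, ∅, ∅, 0⟩ h0 h
  set Finf : Set ℤ := {b : ℤ | ∃ k, b ∈ (st k).F} with hFinfdef
  set A : Set ℤ := (fun b => 3*b) '' (B \ Finf) ∪ ⋃ k, ((st k).G : Set ℤ) with hAdef
  have hApos : ∀ a ∈ A, 0 < a := by
    rintro a (⟨b, hb, rfl⟩ | ha)
    · have := hBpos b hb.1
      show 0 < 3*b
      omega
    · obtain ⟨k, hk⟩ := Set.mem_iUnion.1 ha
      exact (hinv k).pos a (Or.inr hk)
  have hAst : ∀ a ∈ A, ∃ k₀ : ℕ, ∀ m, k₀ ≤ m → a ∈ PState B (st m) := by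
    rintro a (⟨b, hb, rfl⟩ | ha)
    · refine ⟨0, fun m _ => Or.inl ⟨b, ⟨hb.1, ?_⟩, rfl⟩⟩
      intro hf
      exact hb.2 ⟨m, hf⟩
    · obtain ⟨k, hk⟩ := Set.mem_iUnion.1 ha
      exact ⟨k, fun m hm => Or.inr ((hext hm).hG hk)⟩
  have hAuniq : ∀ u : ℤ, u ≠ 0 → ∀ p q : ℤ × ℤ, (p.1 ∈ A ∧ p.2 ∈ A ∧ p.1 - p.2 = u) →
      (q.1 ∈ A ∧ q.2 ∈ A ∧ q.1 - q.2 = u) → p = q := by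
    rintro u hu p q ⟨hp1, hp2, hp3⟩ ⟨hq1, hq2, hq3⟩
    obtain ⟨k1, h1⟩ := hAst _ hp1
    obtain ⟨k2, h2⟩ := hAst _ hp2
    obtain ⟨k3, h3⟩ := hAst _ hq1
    obtain ⟨k4, h4⟩ := hAst _ hq2
    set M : ℕ := max (max k1 k2) (max k3 k4) with hMdef
    have hs := (hinv M).sidon p.1 (h1 M (by omega)) p.2 (h2 M (by omega))
      q.1 (h3 M (by omega)) q.2 (h4 M (by omega)) (by omega)
    rcases hs with h | ⟨ha, hb⟩
    · exfalso
      omega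
    · exact Prod.ext ha hb
  have hCoreA : ∀ (k : ℕ) (x : ℤ), x ∈ (↑(st k).G ∪ ↑(st k).Pi : Set ℤ) → x ∈ A := by
    intro k x hx
    rcases hx with hx | hx
    · exact Or.inr (Set.mem_iUnion.2 ⟨k, hx⟩)
    · have hxP := (hinv k).piP x hx
      rcases hxP with ⟨b, hb, rfl⟩ | hxG
      · refine Or.inl ⟨b, ⟨hb.1, ?_⟩, rfl⟩
        rintro ⟨m, hm⟩
        by_cases hmk : m ≤ k
        · exact hb.2 ((hext hmk).hF hm)
        · have hnew := (hext (le_of_not_ge hmk : k ≤ m)).newF b hm (fun hc => hb.2 hc)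
          have hpk : 3*b ≤ (st k).K := (hinv k).piK _ hx
          omega
      · exact Or.inr (Set.mem_iUnion.2 ⟨k, hxG⟩)
  have hperf : IsPerfectDifferenceSet A := by
    intro u hu
    obtain ⟨n, hn⟩ := useq_surj u
    obtain ⟨x, hx, y, hy, hxy⟩ := (hinv (n+1)).core n (by omega) (by rw [hn]; exact hu)
    have hmem : ((x, y) : ℤ × ℤ).1 ∈ A ∧ ((x, y) : ℤ × ℤ).2 ∈ A ∧
        ((x, y) : ℤ × ℤ).1 - ((x, y) : ℤ × ℤ).2 = u :=
      ⟨hCoreA _ _ hx, hCoreA _ _ hy, by rw [show ((x,y) : ℤ×ℤ).1 - ((x,y) : ℤ×ℤ).2 = x - y from rfl, hxy, hn]⟩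
    exact ⟨(x, y), hmem, fun q hq => hAuniq u hu q (x, y) hq hmem⟩
  obtain ⟨θ₀, hθ₀⟩ := eventually_atTop.1 (tendsto_atTop.1 hω (0 : ℝ))
  refine ⟨A, hApos, hperf, ?_⟩
  rw [eventually_atTop]
  refine ⟨max θ₀ 1, ?_⟩
  intro x hx
  have hxθ : θ₀ ≤ x := le_trans (le_max_left _ _) hx
  have hx1 : (1:ℝ) ≤ x := le_trans (le_max_right _ _) hx
  have hx0 : (0:ℝ) ≤ x := by linarith
  have hFinfB : ∀ b ∈ Finf, b ∈ B := by
    rintro b ⟨k, hk⟩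
    exact (hinv k).FB b hk
  have hS1fin : {b ∈ B | (b : ℝ) ≤ x / 3}.Finite := bdd_pos_finite B hBpos (x/3)
  have hSFfin : {b ∈ Finf | (b : ℝ) ≤ x / 3}.Finite := by
    apply hS1fin.subset
    rintro b ⟨hb, hbx⟩
    exact ⟨hFinfB b hb, hbx⟩
  have hS2fin : {b ∈ B \ Finf | (b : ℝ) ≤ x / 3}.Finite := by
    apply hS1fin.subset
    rintro b ⟨hb, hbx⟩
    exact ⟨hb.1, hbx⟩
  have hSAfin : {a ∈ A | (a : ℝ) ≤ x}.Finite := bdd_pos_finite A hApos x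
  have hinj : Function.Injective (fun b : ℤ => 3*b) := by
    intro a b h
    simp only at h
    omega
  have himg : (fun b : ℤ => 3*b) '' {b ∈ B \ Finf | (b : ℝ) ≤ x / 3} ⊆ {a ∈ A | (a : ℝ) ≤ x} := by
    rintro p ⟨b, ⟨hb, hbx⟩, rfl⟩
    constructor
    · exact Or.inl ⟨b, hb, rfl⟩
    · show ((3*b : ℤ) : ℝ) ≤ x
      push_cast
      linarith
  have h2 : {b ∈ B \ Finf | (b : ℝ) ≤ x / 3}.ncard ≤ {a ∈ A | (a : ℝ) ≤ x}.ncard := by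
    rw [← Set.ncard_image_of_injective {b ∈ B \ Finf | (b : ℝ) ≤ x / 3} hinj]
    exact Set.ncard_le_ncard himg hSAfin
  have hsub : {b ∈ B | (b : ℝ) ≤ x / 3} ⊆
      {b ∈ B \ Finf | (b : ℝ) ≤ x / 3} ∪ {b ∈ Finf | (b : ℝ) ≤ x / 3} := by
    rintro b ⟨hb, hbx⟩
    by_cases hbf : b ∈ Finf
    · exact Or.inr ⟨hbf, hbx⟩
    · exact Or.inl ⟨⟨hb, hbf⟩, hbx⟩
  have h1 : {b ∈ B | (b : ℝ) ≤ x / 3}.ncard ≤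
      {b ∈ B \ Finf | (b : ℝ) ≤ x / 3}.ncard + {b ∈ Finf | (b : ℝ) ≤ x / 3}.ncard := by
    calc {b ∈ B | (b : ℝ) ≤ x / 3}.ncard
        ≤ ({b ∈ B \ Finf | (b : ℝ) ≤ x / 3} ∪ {b ∈ Finf | (b : ℝ) ≤ x / 3}).ncard :=
          Set.ncard_le_ncard hsub (hS2fin.union hSFfin)
      _ ≤ _ := Set.ncard_union_le _ _
  have hSF : ({b ∈ Finf | (b : ℝ) ≤ x / 3}.ncard : ℝ) ≤ ω x := by
    rcases Set.eq_empty_or_nonempty {b ∈ Finf | (b : ℝ) ≤ x / 3} with he | ⟨b₀, hb₀⟩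
    · rw [he]
      simpa using hθ₀ x hxθ
    · obtain ⟨m, hm⟩ := finset_subset_stage (fun k => (st k).F)
        (fun k m hkm => (hext hkm).hF) hSFfin.toFinset
        (fun b hb => ((hSFfin.mem_toFinset.1 hb).1 : ∃ k, b ∈ (st k).F))
      have hsub' : {b ∈ Finf | (b : ℝ) ≤ x / 3} ⊆
          ↑((st m).F.filter (fun b => ((3*b : ℤ) : ℝ) ≤ x)) := by
        rintro b ⟨hbF, hbx⟩
        have hbm : b ∈ (st m).F := hm b (hSFfin.mem_toFinset.2 ⟨hbF, hbx⟩)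
        refine Finset.mem_coe.2 (Finset.mem_filter.2 ⟨hbm, ?_⟩)
        push_cast
        linarith
      have hcard : {b ∈ Finf | (b : ℝ) ≤ x / 3}.ncard ≤
          ((st m).F.filter (fun b => ((3*b : ℤ) : ℝ) ≤ x)).card := by
        calc {b ∈ Finf | (b : ℝ) ≤ x / 3}.ncard
            ≤ (↑((st m).F.filter (fun b => ((3*b : ℤ) : ℝ) ≤ x)) : Set ℤ).ncard :=
              Set.ncard_le_ncard hsub' (Finset.finite_toSet _)
          _ = _ := Set.ncard_coe_finset _
      have hwit : ∃ b ∈ (st m).F, ((3*b : ℤ) : ℝ) ≤ x := by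
        obtain ⟨hb₀F, hb₀x⟩ := hb₀
        refine ⟨b₀, hm b₀ (hSFfin.mem_toFinset.2 ⟨hb₀F, hb₀x⟩), ?_⟩
        push_cast
        linarith
      have hcount := (hinv m).count x hx0 hwit
      calc ({b ∈ Finf | (b : ℝ) ≤ x / 3}.ncard : ℝ)
          ≤ (((st m).F.filter (fun b => ((3*b : ℤ) : ℝ) ≤ x)).card : ℝ) := by
            exact_mod_cast hcard
        _ ≤ ω x := hcount
  have h1' : ({b ∈ B | (b : ℝ) ≤ x / 3}.ncard : ℝ) ≤
      ({b ∈ B \ Finf | (b : ℝ) ≤ x / 3}.ncard : ℝ) + ({b ∈ Finf | (b : ℝ) ≤ x / 3}.ncard : ℝ) := by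
    exact_mod_cast h1
  have h2' : ({b ∈ B \ Finf | (b : ℝ) ≤ x / 3}.ncard : ℝ) ≤ ({a ∈ A | (a : ℝ) ≤ x}.ncard : ℝ) := by
    exact_mod_cast h2
  linarith
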